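/- Let n ≥ 1, β > 0, t > 0, and let f : ℝⁿ → ℝ be continuous and bounded. Define u(x,t) = −β⁻¹ log( ∫_{ℝⁿ} G_{β⁻¹ t}(x−y) exp(−β f(y)) dy ) where G_s(x) = (2πs)^{−n/2} exp(−‖x‖²/(2s)). For each x let ρ₁(y; x) = Z₁(x)⁻¹ exp(−β f(y) − (β/(2t))‖x−y‖²), where Z₁(x) = ∫_{ℝⁿ} exp(−β f(y) − (β/(2t))‖x−y‖²) dy. Then the spatial gradient of u satisfies ∇u(x,t) = ∫_{ℝⁿ} ((x−y)/t) ρ₁(y; x) dy for every x ∈ ℝⁿ. -/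

import Mathlib

open Real MeasureTheory InnerProductSpace

set_option synthInstance.maxHeartbeats 1000000
set_option maxHeartbeats 1000000

/-- The heat kernel `G_s(x) = (2πs)^{-n/2} exp(-‖x‖²/(2s))`. -/
noncomputable def heatKernel {n : ℕ} (s : ℝ) (x : EuclideanSpace ℝ (Fin n)) : ℝ :=
  (2 * Real.pi * s) ^ (-(n : ℝ) / 2) * Real.exp (-‖x‖ ^ 2 / (2 * s))

/-- The local entropy `u(x,t) = -β⁻¹ log( ∫ G_{β⁻¹ t}(x-y) exp(-β f(y)) dy )`. -/
noncomputable def localEntropy {n : ℕ} (β : ℝ) (f : EuclideanSpace ℝ (Fin n) → ℝ)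
    (x : EuclideanSpace ℝ (Fin n)) (t : ℝ) : ℝ :=
  -β⁻¹ * Real.log (∫ y, heatKernel (β⁻¹ * t) (x - y) * Real.exp (-β * f y))

/-- The normalizing constant `Z₁(x) = ∫ exp(-β f(y) - (β/(2t))‖x-y‖²) dy`. -/
noncomputable def Z1 {n : ℕ} (β t : ℝ) (f : EuclideanSpace ℝ (Fin n) → ℝ)
    (x : EuclideanSpace ℝ (Fin n)) : ℝ :=
  ∫ y, Real.exp (-β * f y - (β / (2 * t)) * ‖x - y‖ ^ 2)

/-- The Gibbs density `ρ₁(y; x) = Z₁(x)⁻¹ exp(-β f(y) - (β/(2t))‖x-y‖²)`. -/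
noncomputable def rho1 {n : ℕ} (β t : ℝ) (f : EuclideanSpace ℝ (Fin n) → ℝ)
    (x y : EuclideanSpace ℝ (Fin n)) : ℝ :=
  (Z1 β t f x)⁻¹ * Real.exp (-β * f y - (β / (2 * t)) * ‖x - y‖ ^ 2)

lemma gauss_integrable {n : ℕ} {b : ℝ} (hb : 0 < b) :
    Integrable (fun v : EuclideanSpace ℝ (Fin n) => Real.exp (-b * ‖v‖ ^ 2)) := by
  have h := (GaussianFourier.integrable_cexp_neg_mul_sq_norm_add
    (V := EuclideanSpace ℝ (Fin n)) (b := (b:ℂ)) (by simpa using hb) 0 0).norm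
  refine h.congr (Filter.Eventually.of_forall fun v => ?_)
  simp only [Complex.norm_exp, zero_mul, add_zero,
    show (-(b:ℂ) * (‖v‖:ℂ)^2) = ((-b * ‖v‖^2 : ℝ) : ℂ) by push_cast; ring,
    Complex.ofReal_re]

lemma key_bound {c : ℝ} (hc : 0 < c) {r s : ℝ} (hr : 0 ≤ r) (hs : 0 ≤ s)
    (h1 : s ≤ r + 1) (h2 : r ≤ s + 1) :
    s * Real.exp (-c * s ^ 2) ≤ Real.exp (2*c + 2/c) * Real.exp (-(c/4) * r ^ 2) := by
  have hsr : r ^ 2 / 2 - 2 ≤ s ^ 2 := by nlinarith [sq_nonneg (r - 2), sq_nonneg (s - r + 1)]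
  have e1 : Real.exp (-c * s ^ 2) ≤ Real.exp (2*c) * Real.exp (-(c/2) * r ^ 2) := by
    rw [← Real.exp_add]
    apply Real.exp_le_exp.2
    nlinarith
  have h2c : c * (2 / c) = 2 := by field_simp
  have e2 : s ≤ Real.exp (2/c) * Real.exp ((c/4) * r ^ 2) := by
    have hre : s ≤ Real.exp r := h1.trans (by linarith [Real.add_one_le_exp r])
    refine hre.trans ?_
    rw [← Real.exp_add]
    apply Real.exp_le_exp.2
    nlinarith [sq_nonneg (c * r - 2), mul_pos hc hc, sq_nonneg r]
  calc s * Real.exp (-c * s ^ 2)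
      ≤ (Real.exp (2/c) * Real.exp ((c/4) * r ^ 2)) * (Real.exp (2*c) * Real.exp (-(c/2) * r ^ 2)) :=
        mul_le_mul e2 e1 (Real.exp_nonneg _) (by positivity)
    _ = Real.exp (2*c + 2/c) * Real.exp (-(c/4) * r ^ 2) := by
        rw [← Real.exp_add, ← Real.exp_add, ← Real.exp_add, ← Real.exp_add]
        ring_nf

/-- The spatial gradient of the local entropy is the average of `(x-y)/t` against
the Gibbs density `ρ₁(y; x)`. -/
theorem stmt_2 (n : ℕ) (hn : 1 ≤ n) (β t : ℝ) (hβ : 0 < β) (ht : 0 < t)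
    (f : EuclideanSpace ℝ (Fin n) → ℝ) (hf : Continuous f)
    (hfb : ∃ M, ∀ x, |f x| ≤ M) :
    ∀ x, gradient (fun x' => localEntropy β f x' t) x
      = ∫ y, rho1 β t f x y • ((1 / t) • (x - y)) := by
  intro x
  obtain ⟨M, hM⟩ := hfb
  set a2 : ℝ := β / (2 * t) with ha2
  have ha2pos : 0 < a2 := by positivity
  set g : EuclideanSpace ℝ (Fin n) → EuclideanSpace ℝ (Fin n) → ℝ := fun x' y => Real.exp (-β * f y - a2 * ‖x' - y‖ ^ 2) with hg
  have hgpos : ∀ x' y, 0 < g x' y := fun _ _ => Real.exp_pos _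
  have hgcont : ∀ x', Continuous (g x') := by
    intro x'
    fun_prop
  have hgle : ∀ x' y, g x' y ≤ Real.exp (β * M) * Real.exp (-a2 * ‖x' - y‖ ^ 2) := by
    intro x' y
    rw [← Real.exp_add]
    apply Real.exp_le_exp.2
    have h1 := (abs_le.1 (hM y)).1
    nlinarith [mul_nonneg hβ.le (by linarith : (0:ℝ) ≤ f y + M)]
  have hgint : ∀ x', Integrable (g x') := by
    intro x'
    refine ((((gauss_integrable ha2pos).comp_sub_left x').const_mul
      (Real.exp (β * M)))).mono' (hgcont x').aestronglyMeasurable ?_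
    exact ae_of_all _ fun y => by
      rw [Real.norm_eq_abs, abs_of_pos (hgpos x' y)]
      exact hgle x' y
  have hZeq : ∀ x', Z1 β t f x' = ∫ y, g x' y := fun x' => rfl
  have hZpos : ∀ x', 0 < Z1 β t f x' := by
    intro x'
    rw [hZeq]
    refine (integral_pos_iff_support_of_nonneg_ae
      (ae_of_all _ fun y => (hgpos x' y).le) (hgint x')).2 ?_
    have hsupp : Function.support (g x') = Set.univ :=
      Set.eq_univ_of_forall fun y => (hgpos x' y).ne'
    rw [hsupp]
    exact isOpen_univ.measure_pos _ Set.univ_nonempty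
  -- the CLM-valued derivative
  set F' : EuclideanSpace ℝ (Fin n) → EuclideanSpace ℝ (Fin n) → (EuclideanSpace ℝ (Fin n) →L[ℝ] ℝ) :=
    fun x' y => (-(β / t) * g x' y) • (innerSL ℝ (x' - y)) with hF'
  have hF'norm : ∀ x' y, ‖F' x' y‖ = (β / t) * g x' y * ‖x' - y‖ := by
    intro x' y
    simp only [hF']
    rw [norm_smul (-(β / t) * g x' y) (innerSL ℝ (x' - y)), Real.norm_eq_abs, abs_mul, abs_neg,
      abs_of_pos (div_pos hβ ht), abs_of_pos (hgpos x' y), innerSL_apply_norm]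
  set bound : EuclideanSpace ℝ (Fin n) → ℝ := fun y =>
    ((β / t) * Real.exp (β * M) * Real.exp (2 * a2 + 2 / a2)) *
      Real.exp (-(a2 / 4) * ‖x - y‖ ^ 2) with hbound
  have hbound_int : Integrable bound :=
    ((gauss_integrable (by positivity : (0:ℝ) < a2 / 4)).comp_sub_left x).const_mul _
  have hbnd : ∀ y : EuclideanSpace ℝ (Fin n), ∀ x' ∈ Metric.ball x 1, ‖F' x' y‖ ≤ bound y := by
    intro y x' hx'
    rw [hF'norm]
    have hxx' : ‖x' - x‖ < 1 := by
      rw [← dist_eq_norm]; exact Metric.mem_ball.1 hx'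
    have hs : ‖x' - y‖ ≤ ‖x - y‖ + 1 := by
      calc ‖x' - y‖ ≤ ‖x' - x‖ + ‖x - y‖ := by
            simpa using norm_sub_le_norm_sub_add_norm_sub x' x y
        _ ≤ ‖x - y‖ + 1 := by linarith
    have hr : ‖x - y‖ ≤ ‖x' - y‖ + 1 := by
      calc ‖x - y‖ ≤ ‖x - x'‖ + ‖x' - y‖ := by
            simpa using norm_sub_le_norm_sub_add_norm_sub x x' y
        _ ≤ ‖x' - y‖ + 1 := by rw [norm_sub_rev]; linarith
    have hkey := key_bound ha2pos (norm_nonneg (x - y)) (norm_nonneg (x' - y)) hs hr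
    calc (β / t) * g x' y * ‖x' - y‖
        ≤ (β / t) * (Real.exp (β * M) * Real.exp (-a2 * ‖x' - y‖ ^ 2)) * ‖x' - y‖ := by
          exact mul_le_mul_of_nonneg_right
            (mul_le_mul_of_nonneg_left (hgle x' y) (le_of_lt (by positivity)))
            (norm_nonneg _)
      _ = ((β / t) * Real.exp (β * M)) * (‖x' - y‖ * Real.exp (-a2 * ‖x' - y‖ ^ 2)) := by ring
      _ ≤ ((β / t) * Real.exp (β * M)) *
            (Real.exp (2 * a2 + 2 / a2) * Real.exp (-(a2 / 4) * ‖x - y‖ ^ 2)) := by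
          refine mul_le_mul_of_nonneg_left hkey (by positivity)
      _ = bound y := by rw [hbound]; ring
  have hderiv : ∀ y : EuclideanSpace ℝ (Fin n), ∀ x' ∈ Metric.ball x 1,
      HasFDerivAt (fun x'' => g x'' y) (F' x' y) x' := by
    intro y x' _
    have h1 : HasFDerivAt (fun x'' : EuclideanSpace ℝ (Fin n) => x'' - y) (ContinuousLinearMap.id ℝ (EuclideanSpace ℝ (Fin n))) x' :=
      (hasFDerivAt_id x').sub_const y
    have h2 := h1.norm_sq
    have h3 : HasFDerivAt (fun x'' : EuclideanSpace ℝ (Fin n) => -β * f y - a2 * ‖x'' - y‖ ^ 2)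
        (-(a2 • (2 • (innerSL ℝ (x' - y)).comp (ContinuousLinearMap.id ℝ (EuclideanSpace ℝ (Fin n)))))) x' :=
      (h2.const_mul a2).const_sub (-β * f y)
    have h4 := h3.exp
    refine h4.congr_fderiv ?_
    refine ContinuousLinearMap.ext fun v => ?_
    have h2t : (2:ℝ) * a2 = β / t := by rw [ha2]; field_simp
    simp only [hF', ContinuousLinearMap.smul_apply, ContinuousLinearMap.neg_apply,
      ContinuousLinearMap.coe_smul', Pi.smul_apply, ContinuousLinearMap.coe_comp',
      Function.comp_apply, ContinuousLinearMap.coe_id', id_eq, smul_eq_mul, innerSL_apply_apply,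
      nsmul_eq_mul, Nat.cast_ofNat]
    rw [← h2t]
    ring
  have hF'cont : Continuous (fun y => F' x y) := by
    simp only [hF']
    exact (continuous_const.mul (Continuous.comp (hgcont x) continuous_id)).smul
      ((innerSL ℝ).continuous.comp (continuous_const.sub continuous_id))
  have hF'int : Integrable (fun y => F' x y) := by
    refine hbound_int.mono' hF'cont.aestronglyMeasurable (ae_of_all _ fun y => ?_)
    exact hbnd y x (Metric.mem_ball_self one_pos)
  have hZderiv : HasFDerivAt (fun x' => Z1 β t f x') (∫ y, F' x y) x := by
    have heq : (fun x' => Z1 β t f x') = fun x' => ∫ y, g x' y := funext hZeq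
    rw [heq]
    exact hasFDerivAt_integral_of_dominated_of_fderiv_le (Metric.ball_mem_nhds x one_pos)
      (Filter.Eventually.of_forall fun x' => (hgcont x').aestronglyMeasurable)
      (hgint x) hF'cont.aestronglyMeasurable
      (ae_of_all _ hbnd) hbound_int (ae_of_all _ hderiv)
  set C : ℝ := (2 * Real.pi * (β⁻¹ * t)) ^ (-(n:ℝ)/2) with hC
  have hCpos : 0 < C := by
    apply Real.rpow_pos_of_pos
    positivity
  have hker : ∀ (x' y : EuclideanSpace ℝ (Fin n)),
      heatKernel (β⁻¹ * t) (x' - y) * Real.exp (-β * f y) = C * g x' y := by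
    intro x' y
    simp only [heatKernel, hg]
    rw [mul_assoc, ← Real.exp_add]
    congr 2
    rw [ha2]
    field_simp
    ring
  have hrepr : ∀ x', localEntropy β f x' t =
      -β⁻¹ * Real.log C + -β⁻¹ * Real.log (Z1 β t f x') := by
    intro x'
    rw [localEntropy]
    simp_rw [hker]
    rw [MeasureTheory.integral_const_mul, ← hZeq,
      Real.log_mul hCpos.ne' (hZpos x').ne']
    ring
  have hu : HasFDerivAt (fun x' => localEntropy β f x' t)
      ((-β⁻¹) • ((Z1 β t f x)⁻¹ • ∫ y, F' x y)) x := by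
    have heq : (fun x' => localEntropy β f x' t) =
        fun x' => -β⁻¹ * Real.log C + -β⁻¹ * Real.log (Z1 β t f x') := funext hrepr
    rw [heq]
    exact ((hZderiv.log (hZpos x).ne').const_mul (-β⁻¹)).const_add (-β⁻¹ * Real.log C)
  have hWcont : Continuous (fun y => rho1 β t f x y • ((1/t) • (x - y))) := by
    have h1 : Continuous fun y => rho1 β t f x y := by
      have he : (fun y => rho1 β t f x y) = fun y => (Z1 β t f x)⁻¹ * g x y := rfl
      rw [he]
      exact continuous_const.mul ((hgcont x).comp continuous_id)
    exact h1.smul (by fun_prop)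
  have hWint : Integrable (fun y => rho1 β t f x y • ((1/t) • (x - y))) := by
    refine ((hbound_int.const_mul ((Z1 β t f x)⁻¹ * β⁻¹)).mono'
      hWcont.aestronglyMeasurable (ae_of_all _ fun y => ?_))
    have hb := hbnd y x (Metric.mem_ball_self one_pos)
    rw [hF'norm] at hb
    have hrho : rho1 β t f x y = (Z1 β t f x)⁻¹ * g x y := rfl
    rw [norm_smul, norm_smul, hrho, Real.norm_eq_abs, Real.norm_eq_abs,
      abs_of_pos (mul_pos (inv_pos.2 (hZpos x)) (hgpos x y)),
      abs_of_pos (by positivity : (0:ℝ) < 1/t)]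
    calc (Z1 β t f x)⁻¹ * g x y * (1/t * ‖x - y‖)
        = ((Z1 β t f x)⁻¹ * β⁻¹) * (β / t * g x y * ‖x - y‖) := by
          have hββ : β⁻¹ * β = 1 := inv_mul_cancel₀ hβ.ne'
          linear_combination (-(Z1 β t f x)⁻¹ * g x y * ‖x - y‖ * t⁻¹) * hββ
      _ ≤ ((Z1 β t f x)⁻¹ * β⁻¹) * bound y := by
          refine mul_le_mul_of_nonneg_left hb
            (le_of_lt (mul_pos (inv_pos.2 (hZpos x)) (inv_pos.2 hβ)))
  have hgrad : HasGradientAt (fun x' => localEntropy β f x' t)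
      (∫ y, rho1 β t f x y • ((1/t) • (x - y))) x := by
    rw [hasGradientAt_iff_hasFDerivAt]
    refine hu.congr_fderiv (Eq.symm ?_)
    refine ContinuousLinearMap.ext fun v => ?_
    rw [toDual_apply_apply, real_inner_comm, ← integral_inner hWint v]
    simp only [ContinuousLinearMap.smul_apply, smul_eq_mul]
    rw [ContinuousLinearMap.integral_apply hF'int v, ← MeasureTheory.integral_const_mul,
      ← MeasureTheory.integral_const_mul]
    refine integral_congr_ae (ae_of_all _ fun y => ?_)
    have hrho : rho1 β t f x y = (Z1 β t f x)⁻¹ * g x y := rfl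
    beta_reduce
    rw [real_inner_smul_right, real_inner_smul_right, hrho]
    simp only [hF', ContinuousLinearMap.smul_apply, innerSL_apply_apply, smul_eq_mul]
    rw [real_inner_comm]
    have hββ : β⁻¹ * β = 1 := inv_mul_cancel₀ hβ.ne'
    linear_combination (-(Z1 β t f x)⁻¹ * g x y * (1/t) * ⟪x - y, v⟫_ℝ) * hββ
  exact hgrad.gradient
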